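/- Let 𝒫 be a collection of k static directed paths with a vertex s on a distinguished path P_s. The maximum, over all labelings λ strictly increasing along each path, of the number of vertices reachable from s in the temporal k-path graph (⊎𝒫, λ), equals the maximum, over all sets 𝒱 of switches satisfying the label-free switch-vertex-set conditions (i)–(iv), of the number of vertices in P_s[s:] ∪ ⋃_{P : 𝒱 contains a switch onto P} P[switchonto(P):]. -/

import Mathlib

/-- A temporal edge of a directed temporal multigraph: a source, a destination,
and an integer time label. -/
structure TEdge (V : Type) where
  src : V
  dst : V
  lab : ℤ

/-- Two consecutive temporal edges form a valid step of a temporal path/walk: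
the head of the first is the tail of the second, and labels strictly increase. -/
def TemporalStep {V : Type} (e f : TEdge V) : Prop :=
  e.dst = f.src ∧ e.lab < f.lab

/-- A temporal path: a sequence of temporal edges forming a directed path with
strictly increasing labels. -/
def IsTemporalPath {V : Type} (p : List (TEdge V)) : Prop :=
  p.Chain' TemporalStep

/-- An annotated temporal walk in the temporal `k`-path graph `⊎ P`: each step
records the base-path its temporal edge comes from, edges form a directed walk
and labels strictly increase. -/
def IsAWalk {V : Type} {k : ℕ} (P : Fin k → List (TEdge V))
    (p : List (Fin k × TEdge V)) : Prop :=
  (∀ x ∈ p, x.2 ∈ P x.1) ∧ p.Chain' (fun x y => TemporalStep x.2 y.2)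

/-- `u` reaches `v` in the temporal `k`-path graph `⊎ P`. -/
def Reaches {V : Type} {k : ℕ} (P : Fin k → List (TEdge V)) (u v : V) : Prop :=
  u = v ∨ ∃ p : List (Fin k × TEdge V), p ≠ [] ∧ IsAWalk P p ∧
    (p.head?.map fun x => x.2.src) = some u ∧
    (p.getLast?.map fun x => x.2.dst) = some v

/-- The list of vertices visited by a static directed path (list of arcs). -/
def staticVerts {V : Type} (p : List (V × V)) : List V :=
  p.map Prod.fst ++ (p.getLast?.map Prod.snd).toList

/-- `v` occurs on the static path `p` at or before `w`. -/
def le_onStatic {V : Type} (p : List (V × V)) (v w : V) : Prop :=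
  ∃ m n : ℕ, m ≤ n ∧ (staticVerts p)[m]? = some v ∧ (staticVerts p)[n]? = some w

/-- `v` occurs on the static path `p` strictly before `w`. -/
def lt_onStatic {V : Type} (p : List (V × V)) (v w : V) : Prop :=
  ∃ m n : ℕ, m < n ∧ (staticVerts p)[m]? = some v ∧ (staticVerts p)[n]? = some w

/-- The edge relation of the switch tree `T_𝒱` on the path indices. -/
def svsEdgeS {V : Type} {k : ℕ} (𝒱 : Set (V × Fin k × Fin k)) (a b : Fin k) : Prop :=
  ∃ v, (v, a, b) ∈ 𝒱

/-- The label-free switch-vertex-set conditions (i)–(iv) for a collection of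
static directed paths with source path index `sIdx`. -/
structure IsStaticSVS {V : Type} {k : ℕ} (paths : Fin k → List (V × V)) (sIdx : Fin k)
    (𝒱 : Set (V × Fin k × Fin k)) : Prop where
  switch_exists : ∀ ⦃v : V⦄ ⦃a b : Fin k⦄, (v, a, b) ∈ 𝒱 →
    (∃ e ∈ paths a, e.2 = v) ∧ ∃ e ∈ paths b, e.1 = v
  unique_onto : ∀ ⦃v v' : V⦄ ⦃a a' b : Fin k⦄,
    (v, a, b) ∈ 𝒱 → (v', a', b) ∈ 𝒱 → v = v' ∧ a = a'
  no_onto_source : ∀ ⦃v : V⦄ ⦃a : Fin k⦄, (v, a, sIdx) ∉ 𝒱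
  onto_before_off : ∀ ⦃v : V⦄ ⦃a b : Fin k⦄, (v, a, b) ∈ 𝒱 →
    ∀ ⦃v' : V⦄ ⦃c : Fin k⦄, (v', b, c) ∈ 𝒱 → lt_onStatic (paths b) v v'
  tree : ∀ ⦃v : V⦄ ⦃a b : Fin k⦄, (v, a, b) ∈ 𝒱 →
    Relation.ReflTransGen (svsEdgeS 𝒱) sIdx a

/-- Turn a static path into a temporal path using a position-indexed labeling. -/
def mkTemporal {V : Type} (p : List (V × V)) (ℓ : ℕ → ℤ) : List (TEdge V) :=
  p.mapIdx fun n e => ⟨e.1, e.2, ℓ n⟩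

section Infra
variable {V : Type}

lemma staticVerts_length {p : List (V × V)} (hp : p ≠ []) :
    (staticVerts p).length = p.length + 1 := by
  simp [staticVerts, List.getLast?_eq_getLast hp]

lemma staticVerts_fst {p : List (V × V)} {n : ℕ} (h : n < p.length) :
    (staticVerts p)[n]? = some (p[n].1) := by
  rw [staticVerts, List.getElem?_append_left (by simpa using h), List.getElem?_map,
    List.getElem?_eq_getElem h]
  rfl

lemma staticVerts_snd {p : List (V × V)} (hc : p.Chain' (fun e f => e.2 = f.1))
    {n : ℕ} (h : n < p.length) :
    (staticVerts p)[n+1]? = some (p[n].2) := by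
  rcases lt_or_eq_of_le (Nat.succ_le_of_lt h) with h' | h'
  · rw [staticVerts_fst h']
    have := List.isChain_iff_getElem.1 hc n (by omega)
    rw [this]
  · have hp : p ≠ [] := by rintro rfl; simp at h
    rw [staticVerts]
    rw [List.getElem?_append_right (by simpa using Nat.le_of_eq h'.symm)]
    have hlast : p.getLast? = some p[n] := by
      rw [List.getLast?_eq_getElem?, List.getElem?_eq_getElem (by omega)]
      congr 1
      congr 1
      omega
    simp only [hlast, Option.map_some, Option.toList_some]
    rw [show n + 1 - (p.map Prod.fst).length = 0 by simp; omega]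
    rfl

lemma mkTemporal_length {p : List (V × V)} {ℓ : ℕ → ℤ} :
    (mkTemporal p ℓ).length = p.length := by
  simp [mkTemporal]

lemma mkTemporal_getElem {p : List (V × V)} {ℓ : ℕ → ℤ} {n : ℕ} (h : n < p.length) :
    (mkTemporal p ℓ)[n]'(by simpa [mkTemporal_length]) = ⟨p[n].1, p[n].2, ℓ n⟩ := by
  simp [mkTemporal, List.getElem_mapIdx]

lemma mem_mkTemporal {p : List (V × V)} {ℓ : ℕ → ℤ} {e : TEdge V} :
    e ∈ mkTemporal p ℓ ↔ ∃ n, ∃ _ : n < p.length, e = ⟨p[n].1, p[n].2, ℓ n⟩ := by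
  rw [List.mem_iff_getElem]
  constructor
  · rintro ⟨n, h, rfl⟩
    refine ⟨n, by simpa [mkTemporal_length] using h, ?_⟩
    rw [mkTemporal_getElem (by simpa [mkTemporal_length] using h)]
  · rintro ⟨n, h, rfl⟩
    exact ⟨n, by simpa [mkTemporal_length], mkTemporal_getElem h⟩

end Infra

section Walks
variable {V : Type} {k : ℕ}

lemma pos_unique {α : Type*} {l : List α} (hnd : l.Nodup) {m n : ℕ} {v : α}
    (hm : l[m]? = some v) (hn : l[n]? = some v) : m = n := by
  have hml : m < l.length := by
    by_contra h
    rw [List.getElem?_eq_none (by omega)] at hm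
    cases hm
  exact (List.getElem?_inj hml hnd).1 (hm.trans hn.symm)

lemma mkTemporal_chain' {p : List (V × V)} {f : ℕ → ℤ}
    (hc : p.Chain' (fun e g => e.2 = g.1))
    (hm : ∀ n, n + 1 < p.length → f n < f (n + 1)) :
    (mkTemporal p f).Chain' TemporalStep := by
  show List.IsChain _ _
  rw [List.isChain_iff_getElem]
  intro j hj
  rw [mkTemporal_length] at hj
  have hj1 : j + 1 < p.length := by omega
  rw [mkTemporal_getElem (by omega), mkTemporal_getElem hj1]
  refine ⟨?_, hm j hj1⟩
  have := List.isChain_iff_getElem.1 hc j (by omega)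
  simpa using this

def walkSeg (paths : Fin k → List (V × V)) (ℓ : Fin k → ℕ → ℤ) (b : Fin k) (i len : ℕ) :
    List (Fin k × TEdge V) :=
  (((mkTemporal (paths b) (ℓ b)).drop i).take len).map (fun e => (b, e))

variable {paths : Fin k → List (V × V)} {ℓ : Fin k → ℕ → ℤ}

lemma walkSeg_length {b : Fin k} {i len : ℕ} (h : i + len ≤ (paths b).length) :
    (walkSeg paths ℓ b i len).length = len := by
  simp only [walkSeg, List.length_map, List.length_take, List.length_drop, mkTemporal_length]
  omega

lemma walkSeg_getElem {b : Fin k} {i len j : ℕ} (h : i + len ≤ (paths b).length)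
    (hj : j < len) :
    (walkSeg paths ℓ b i len)[j]'(by rw [walkSeg_length h]; exact hj) =
      (b, ⟨((paths b)[i+j]'(by omega)).1, ((paths b)[i+j]'(by omega)).2, ℓ b (i+j)⟩) := by
  simp only [walkSeg, List.getElem_map, List.getElem_take, List.getElem_drop]
  rw [mkTemporal_getElem (by omega)]

lemma walkSeg_ne_nil {b : Fin k} {i len : ℕ} (h : i + len ≤ (paths b).length)
    (h0 : 0 < len) : walkSeg paths ℓ b i len ≠ [] := by
  intro hcon
  have := walkSeg_length (ℓ := ℓ) h
  rw [hcon] at this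
  simp at this
  omega

lemma walkSeg_head? {b : Fin k} {i len : ℕ} (h : i + len ≤ (paths b).length)
    (h0 : 0 < len) :
    (walkSeg paths ℓ b i len).head? =
      some (b, ⟨((paths b)[i]'(by omega)).1, ((paths b)[i]'(by omega)).2, ℓ b i⟩) := by
  rw [List.head?_eq_getElem?, List.getElem?_eq_getElem (by rw [walkSeg_length h]; exact h0)]
  rw [walkSeg_getElem h h0]
  simp

lemma walkSeg_getLast? {b : Fin k} {i len : ℕ} (h : i + len ≤ (paths b).length)
    (h0 : 0 < len) :
    (walkSeg paths ℓ b i len).getLast? =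
      some (b, ⟨((paths b)[i+(len-1)]'(by omega)).1, ((paths b)[i+(len-1)]'(by omega)).2,
        ℓ b (i+(len-1))⟩) := by
  rw [List.getLast?_eq_getElem?, walkSeg_length h,
    List.getElem?_eq_getElem (by rw [walkSeg_length h]; omega)]
  rw [walkSeg_getElem h (by omega)]

lemma walkSeg_isAWalk {b : Fin k} {i len : ℕ}
    (hc : (paths b).Chain' (fun e g => e.2 = g.1))
    (hm : ∀ n, n + 1 < (paths b).length → ℓ b n < ℓ b (n + 1)) :
    IsAWalk (fun j => mkTemporal (paths j) (ℓ j)) (walkSeg paths ℓ b i len) := by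
  constructor
  · intro x hx
    simp only [walkSeg, List.mem_map] at hx
    obtain ⟨e, he, rfl⟩ := hx
    exact List.mem_of_mem_drop (List.mem_of_mem_take he)
  · rw [walkSeg]
    show List.IsChain _ _
    rw [List.isChain_map]
    exact ((mkTemporal_chain' hc hm).drop i).take len

lemma IsAWalk.append {P : Fin k → List (TEdge V)} {w1 w2 : List (Fin k × TEdge V)}
    (h1 : IsAWalk P w1) (h2 : IsAWalk P w2)
    (hstep : ∀ x ∈ w1.getLast?, ∀ y ∈ w2.head?, TemporalStep x.2 y.2) :
    IsAWalk P (w1 ++ w2) := by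
  refine ⟨?_, List.isChain_append.2 ⟨h1.2, h2.2, hstep⟩⟩
  intro x hx
  rcases List.mem_append.1 hx with h | h
  · exact h1.1 x h
  · exact h2.1 x h

end Walks

section DirB
variable {V : Type} {k : ℕ}

def Rn (𝒱 : Set (V × Fin k × Fin k)) (sIdx : Fin k) : ℕ → Fin k → Prop
  | 0, b => b = sIdx
  | n+1, b => ∃ a, Rn 𝒱 sIdx n a ∧ svsEdgeS 𝒱 a b

lemma exists_Rn {𝒱 : Set (V × Fin k × Fin k)} {sIdx b : Fin k}
    (h : Relation.ReflTransGen (svsEdgeS 𝒱) sIdx b) : ∃ n, Rn 𝒱 sIdx n b := by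
  induction h with
  | refl => exact ⟨0, rfl⟩
  | tail _ hbc ih => obtain ⟨n, hn⟩ := ih; exact ⟨n+1, _, hn, hbc⟩

noncomputable def depthV (𝒱 : Set (V × Fin k × Fin k)) (sIdx : Fin k) (b : Fin k) : ℕ :=
  sInf {n | Rn 𝒱 sIdx n b}

lemma depthV_sIdx (𝒱 : Set (V × Fin k × Fin k)) (sIdx : Fin k) :
    depthV 𝒱 sIdx sIdx = 0 :=
  Nat.eq_zero_of_le_zero (Nat.sInf_le (by exact rfl))

lemma Rn_depthV {𝒱 : Set (V × Fin k × Fin k)} {sIdx b : Fin k}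
    (h : Relation.ReflTransGen (svsEdgeS 𝒱) sIdx b) :
    Rn 𝒱 sIdx (depthV 𝒱 sIdx b) b :=
  Nat.sInf_mem (exists_Rn h)

lemma depthV_pos {paths : Fin k → List (V × V)} {𝒱 : Set (V × Fin k × Fin k)} {sIdx : Fin k}
    (hV : IsStaticSVS paths sIdx 𝒱) {v : V} {a b : Fin k} (h : (v, a, b) ∈ 𝒱) :
    0 < depthV 𝒱 sIdx b := by
  rcases Nat.eq_zero_or_pos (depthV 𝒱 sIdx b) with h0 | h0
  · have hr : Relation.ReflTransGen (svsEdgeS 𝒱) sIdx b :=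
      (hV.tree h).tail ⟨v, h⟩
    have := Rn_depthV hr
    rw [h0] at this
    subst this
    exact (hV.no_onto_source (v := v) (a := a) h).elim
  · exact h0

lemma depthV_parent_lt {paths : Fin k → List (V × V)} {𝒱 : Set (V × Fin k × Fin k)}
    {sIdx : Fin k} (hV : IsStaticSVS paths sIdx 𝒱) {v : V} {a b : Fin k}
    (h : (v, a, b) ∈ 𝒱) : depthV 𝒱 sIdx a < depthV 𝒱 sIdx b := by
  have hb : Relation.ReflTransGen (svsEdgeS 𝒱) sIdx b := (hV.tree h).tail ⟨v, h⟩
  have hmem := Rn_depthV hb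
  have hpos := depthV_pos hV h
  obtain ⟨m, hm⟩ : ∃ m, depthV 𝒱 sIdx b = m + 1 := ⟨depthV 𝒱 sIdx b - 1, by omega⟩
  rw [hm] at hmem
  simp only [Rn, svsEdgeS] at hmem
  obtain ⟨c, hc, v', hv'⟩ := hmem
  obtain ⟨-, hac⟩ := hV.unique_onto h hv'
  rw [← hac] at hc
  have : depthV 𝒱 sIdx a ≤ m := Nat.sInf_le hc
  omega

end DirB

section DirBMain
variable {V : Type} {k : ℕ}

lemma dirB (paths : Fin k → List (V × V))
    (hpaths : ∀ i, (paths i).Chain' (fun e f => e.2 = f.1))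
    (sIdx : Fin k) (s : V)
    (hnd : ∀ i, (staticVerts (paths i)).Nodup)
    (hfirst : (staticVerts (paths sIdx)).head? = some s)
    (𝒱 : Set (V × Fin k × Fin k)) (hV : IsStaticSVS paths sIdx 𝒱) :
    ∃ ℓ : Fin k → ℕ → ℤ,
      (∀ i n, n + 1 < (paths i).length → ℓ i n < ℓ i (n + 1)) ∧
      ({w | le_onStatic (paths sIdx) s w} ∪
        {w | ∃ v a b, (v, a, b) ∈ 𝒱 ∧ le_onStatic (paths b) v w}) ⊆
      {w | Reaches (fun i => mkTemporal (paths i) (ℓ i)) s w} := by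
  classical
  set N0 : ℤ := ((Finset.univ.sup fun i : Fin k => (paths i).length : ℕ) : ℤ) + 1 with hN0
  have hlen : ∀ i : Fin k, ((paths i).length : ℤ) < N0 := by
    intro i
    have h1 : (paths i).length ≤ (Finset.univ.sup fun i : Fin k => (paths i).length) :=
      Finset.le_sup (f := fun i : Fin k => (paths i).length) (Finset.mem_univ i)
    have h2 : ((paths i).length : ℤ) ≤
        ((Finset.univ.sup fun i : Fin k => (paths i).length : ℕ) : ℤ) := by exact_mod_cast h1
    omega
  have hN0pos : 0 < N0 := by positivity
  set dep := depthV 𝒱 sIdx with hdep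
  set ℓV : Fin k → ℕ → ℤ := fun i n => N0 * dep i + n with hℓV
  have hmono : ∀ i n, n + 1 < (paths i).length → ℓV i n < ℓV i (n + 1) := by
    intro i n _
    have : (n : ℤ) < (n + 1 : ℕ) := by exact_mod_cast Nat.lt_succ_self n
    simp only [hℓV]
    omega
  set P : Fin k → List (TEdge V) := fun i => mkTemporal (paths i) (ℓV i) with hP
  -- head vertex of source path
  have hfirst' : (staticVerts (paths sIdx))[0]? = some s := by
    rwa [List.head?_eq_getElem?] at hfirst
  have A : ∀ (N : ℕ) (v : V) (a b : Fin k), (v, a, b) ∈ 𝒱 → dep b ≤ N →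
      ∃ w, w ≠ [] ∧ IsAWalk P w ∧ (w.head?.map fun x => x.2.src) = some s ∧
        ∃ x, w.getLast? = some x ∧ x.2.dst = v ∧ x.2.lab < N0 * dep b := by
    intro N
    induction N with
    | zero =>
      intro v a b h hd
      have := depthV_pos hV h
      rw [← hdep] at this
      omega
    | succ N IH =>
      intro v a b h hd
      have hposb : 0 < dep b := by
        have := depthV_pos hV h; rw [← hdep] at this; exact this
      obtain ⟨⟨arc, harcmem, harc2⟩, -⟩ := hV.switch_exists h
      obtain ⟨q, hq, harcq⟩ := List.mem_iff_getElem.1 harcmem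
      have hvq : ((paths a)[q]'hq).2 = v := by rw [harcq]; exact harc2
      have hdepb1 : (1 : ℤ) ≤ (dep b : ℤ) := by exact_mod_cast hposb
      have hqN0 : (q : ℤ) < N0 := by
        have : (q : ℤ) < ((paths a).length : ℤ) := by exact_mod_cast hq
        have := hlen a
        omega
      by_cases ha : a = sIdx
      · subst ha
        refine ⟨walkSeg paths ℓV a 0 (q + 1), walkSeg_ne_nil (by omega) (by omega),
          walkSeg_isAWalk (hpaths a) (fun n hn => hmono a n hn), ?_, ?_⟩
        · rw [walkSeg_head? (by omega) (by omega)]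
          simp only [Option.map_some]
          have h0 : (staticVerts (paths a))[0]? = some (((paths a)[0]'(by omega)).1) :=
            staticVerts_fst (by omega)
          rw [h0] at hfirst'
          simpa using hfirst'
        · refine ⟨_, walkSeg_getLast? (by omega) (by omega), ?_, ?_⟩
          · simp only [show 0 + (q + 1 - 1) = q from by omega]
            exact hvq
          · simp only [show 0 + (q + 1 - 1) = q from by omega]
            have hdeps : dep a = 0 := by rw [hdep]; exact depthV_sIdx 𝒱 a
            simp only [hℓV, hdeps]
            push_cast
            have : N0 * 1 ≤ N0 * (dep b : ℤ) := by
              apply mul_le_mul_of_nonneg_left hdepb1 hN0pos.le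
            omega
      · -- a ≠ sIdx
        have hra : Relation.ReflTransGen (svsEdgeS 𝒱) sIdx a := hV.tree h
        have hRa := Rn_depthV hra
        have hdepa0 : depthV 𝒱 sIdx a ≠ 0 := by
          intro h0
          rw [h0] at hRa
          exact ha hRa
        obtain ⟨m0, hm0⟩ : ∃ m0, depthV 𝒱 sIdx a = m0 + 1 :=
          ⟨depthV 𝒱 sIdx a - 1, by omega⟩
        rw [hm0] at hRa
        simp only [Rn, svsEdgeS] at hRa
        obtain ⟨c, -, v', hv'⟩ := hRa
        have hdab : dep a < dep b := by
          have := depthV_parent_lt hV h; rw [← hdep] at this; exact this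
        obtain ⟨wA, hne, hwalk, hhead, xA, hxlast, hxdst, hxlab⟩ :=
          IH v' c a hv' (by omega)
        obtain ⟨-, ⟨arc', harc'mem, harc'1⟩⟩ := hV.switch_exists hv'
        obtain ⟨p', hp', harc'q⟩ := List.mem_iff_getElem.1 harc'mem
        have hv'p : ((paths a)[p']'hp').1 = v' := by rw [harc'q]; exact harc'1
        obtain ⟨m1, n1, hmn1, hm1, hn1⟩ := hV.onto_before_off hv' h
        have hm1' : (staticVerts (paths a))[p']? = some v' := by
          rw [staticVerts_fst hp', hv'p]
        have hn1' : (staticVerts (paths a))[q+1]? = some v := by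
          rw [staticVerts_snd (hpaths a) hq, hvq]
        have hm1p : m1 = p' := pos_unique (hnd a) hm1 hm1'
        have hn1q : n1 = q + 1 := pos_unique (hnd a) hn1 hn1'
        have hp'q : p' ≤ q := by omega
        have hseg : p' + (q + 1 - p') ≤ (paths a).length := by omega
        have hseg0 : 0 < q + 1 - p' := by omega
        have hdaN : (dep a : ℤ) + 1 ≤ (dep b : ℤ) := by exact_mod_cast hdab
        refine ⟨wA ++ walkSeg paths ℓV a p' (q + 1 - p'),
          fun hcon => hne (List.append_eq_nil_iff.1 hcon).1,
          hwalk.append (walkSeg_isAWalk (hpaths a) (fun n hn => hmono a n hn)) ?_,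
          ?_, ?_⟩
        · intro x hx y hy
          rw [hxlast, Option.mem_some_iff] at hx
          rw [walkSeg_head? hseg hseg0, Option.mem_some_iff] at hy
          subst hx; subst hy
          constructor
          · rw [hxdst, hv'p]
          · simp only [hℓV]
            have : (0:ℤ) ≤ (p' : ℤ) := by positivity
            omega
        · obtain ⟨y0, hy0, hy0s⟩ := Option.map_eq_some_iff.1 hhead
          rw [List.head?_append, hy0]
          simp [hy0s]
        · rw [List.getLast?_append, walkSeg_getLast? hseg hseg0]
          refine ⟨_, rfl, ?_, ?_⟩
          · simp only [show p' + (q + 1 - p' - 1) = q from by omega]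
            exact hvq
          · simp only [show p' + (q + 1 - p' - 1) = q from by omega]
            simp only [hℓV]
            have : N0 * ((dep a : ℤ) + 1) ≤ N0 * (dep b : ℤ) :=
              mul_le_mul_of_nonneg_left hdaN hN0pos.le
            nlinarith
  refine ⟨ℓV, hmono, ?_⟩
  intro w hw
  rcases hw with hw | ⟨v, a, b, hvab, m, n, hmn, hm, hn⟩
  · obtain ⟨m, n, hmn, hm, hn⟩ := hw
    have hm0 : m = 0 := pos_unique (hnd sIdx) hm hfirst'
    have hlen0 : 0 < (paths sIdx).length := by
      by_contra h0
      have hnil : paths sIdx = [] := List.length_eq_zero_iff.1 (by omega)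
      rw [hnil] at hfirst'
      simp [staticVerts] at hfirst'
    have hnelt : n < (staticVerts (paths sIdx)).length := by
      by_contra h0
      rw [List.getElem?_eq_none (by omega)] at hn; cases hn
    have hsvlen : (staticVerts (paths sIdx)).length = (paths sIdx).length + 1 :=
      staticVerts_length (List.ne_nil_of_length_pos hlen0)
    rcases Nat.eq_zero_or_pos n with h0 | h0
    · subst h0
      rw [hfirst'] at hn
      exact Or.inl (Option.some.inj hn)
    · have hn1 : n - 1 < (paths sIdx).length := by omega
      have hwn : w = ((paths sIdx)[n-1]'hn1).2 := by
        have h2 := staticVerts_snd (hpaths sIdx) hn1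
        rw [show n - 1 + 1 = n from by omega] at h2
        rw [h2] at hn
        exact (Option.some.inj hn).symm
      refine Or.inr ⟨walkSeg paths ℓV sIdx 0 n, walkSeg_ne_nil (by omega) (by omega),
        walkSeg_isAWalk (hpaths sIdx) (fun n hn => hmono sIdx n hn), ?_, ?_⟩
      · rw [walkSeg_head? (by omega) (by omega)]
        simp only [Option.map_some]
        rw [staticVerts_fst (by omega)] at hfirst'
        simpa using hfirst'
      · rw [walkSeg_getLast? (by omega) (by omega)]
        simp only [Option.map_some]
        rw [hwn]
        simp only [show 0 + (n - 1) = n - 1 from by omega]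
  · obtain ⟨wA, hne, hwalk, hhead, xA, hxlast, hxdst, hxlab⟩ :=
      A (dep b) v a b hvab le_rfl
    obtain ⟨-, ⟨arc, harcmem, harc1⟩⟩ := hV.switch_exists hvab
    obtain ⟨p, hp, harcq⟩ := List.mem_iff_getElem.1 harcmem
    have hvp : ((paths b)[p]'hp).1 = v := by rw [harcq]; exact harc1
    have hm' : (staticVerts (paths b))[p]? = some v := by rw [staticVerts_fst hp, hvp]
    have hmp : m = p := pos_unique (hnd b) hm hm'
    have hnlt : n < (staticVerts (paths b)).length := by
      by_contra h0
      rw [List.getElem?_eq_none (by omega)] at hn; cases hn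
    have hsvlen : (staticVerts (paths b)).length = (paths b).length + 1 :=
      staticVerts_length (List.ne_nil_of_length_pos (by omega))
    rcases eq_or_lt_of_le hmn with h0 | h0
    · rw [← h0, hmp] at hn
      have hwv : v = w := by rw [hm'] at hn; exact Option.some.inj hn
      refine Or.inr ⟨wA, hne, hwalk, hhead, ?_⟩
      rw [hxlast]
      simp only [Option.map_some]
      rw [hxdst, hwv]
    · have hn1 : n - 1 < (paths b).length := by omega
      have hwn : w = ((paths b)[n-1]'hn1).2 := by
        have h2 := staticVerts_snd (hpaths b) hn1
        rw [show n - 1 + 1 = n from by omega] at h2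
        rw [h2] at hn
        exact (Option.some.inj hn).symm
      have hsegb : p + (n - p) ≤ (paths b).length := by omega
      have hsegb0 : 0 < n - p := by omega
      refine Or.inr ⟨wA ++ walkSeg paths ℓV b p (n - p),
        fun hcon => hne (List.append_eq_nil_iff.1 hcon).1,
        hwalk.append (walkSeg_isAWalk (hpaths b) (fun n hn => hmono b n hn)) ?_, ?_, ?_⟩
      · intro x hx y hy
        rw [hxlast, Option.mem_some_iff] at hx
        rw [walkSeg_head? hsegb hsegb0, Option.mem_some_iff] at hy
        subst hx; subst hy
        refine ⟨by rw [hxdst, hvp], ?_⟩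
        have hppos : (0:ℤ) ≤ (p:ℤ) := by positivity
        simp only [hℓV]
        omega
      · obtain ⟨y0, hy0, hy0s⟩ := Option.map_eq_some_iff.1 hhead
        rw [List.head?_append, hy0]
        simp [hy0s]
      · rw [List.getLast?_append, walkSeg_getLast? hsegb hsegb0,
          show ∀ (x : Fin k × TEdge V) (o : Option (Fin k × TEdge V)),
            (some x).or o = some x from fun _ _ => rfl,
          Option.map_some]
        rw [hwn]
        simp only [show p + (n - p - 1) = n - 1 from by omega]

end DirBMain

section DirAMain
variable {V : Type} {k : ℕ}

lemma lab_mono {p : List (V × V)} {f : ℕ → ℤ}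
    (hm : ∀ n, n + 1 < p.length → f n < f (n + 1)) :
    ∀ d m, m + d < p.length → f m ≤ f (m + d) := by
  intro d
  induction d with
  | zero => intro m _; simp
  | succ d IH =>
    intro m h
    have h1 : m + d < p.length := by omega
    calc f m ≤ f (m + d) := IH m h1
      _ ≤ f (m + d + 1) := le_of_lt (hm (m + d) (by omega))
      _ = f (m + (d + 1)) := by ring_nf

lemma dirA (paths : Fin k → List (V × V))
    (hpaths : ∀ i, (paths i).Chain' (fun e f => e.2 = f.1))
    (sIdx : Fin k) (s : V)
    (hnd : ∀ i, (staticVerts (paths i)).Nodup)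
    (hfirst : (staticVerts (paths sIdx)).head? = some s)
    (honly : ∀ i, s ∈ staticVerts (paths i) → i = sIdx)
    (ℓ : Fin k → ℕ → ℤ)
    (hmono : ∀ i n, n + 1 < (paths i).length → ℓ i n < ℓ i (n + 1)) :
    ∃ 𝒱 : Set (V × Fin k × Fin k), IsStaticSVS paths sIdx 𝒱 ∧
      {w | Reaches (fun i => mkTemporal (paths i) (ℓ i)) s w} ⊆
      ({w | le_onStatic (paths sIdx) s w} ∪
        {w | ∃ v a b, (v, a, b) ∈ 𝒱 ∧ le_onStatic (paths b) v w}) := by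
  classical
  set P : Fin k → List (TEdge V) := fun i => mkTemporal (paths i) (ℓ i) with hP
  have hfirst' : (staticVerts (paths sIdx))[0]? = some s := by
    rwa [List.head?_eq_getElem?] at hfirst
  set Ends : Fin k → ℕ → Prop := fun i n =>
    ∃ w, w ≠ [] ∧ IsAWalk P w ∧ (Option.map (fun x => x.2.src) w.head?) = some s ∧
      ∃ h : n < (paths i).length,
        w.getLast? = some (i, ⟨((paths i)[n]'h).1, ((paths i)[n]'h).2, ℓ i n⟩)
    with hEnds
  set E : Set (Fin k) := {i | ∃ n, Ends i n} with hE
  set nf : Fin k → ℕ := fun i => sInf {n | Ends i n} with hnf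
  have nf_mem : ∀ i, i ∈ E → Ends i (nf i) := fun i hi => Nat.sInf_mem hi
  have nf_lt : ∀ i, i ∈ E → nf i < (paths i).length := by
    intro i hi
    obtain ⟨w, -, -, -, h, -⟩ := nf_mem i hi
    exact h
  set vf : Fin k → V := fun i => (((paths i)[nf i]?).map Prod.fst).getD s with hvf
  have vf_eq : ∀ i (h : nf i < (paths i).length), vf i = ((paths i)[nf i]'h).1 := by
    intro i h
    simp [hvf, List.getElem?_eq_getElem h]
  -- the key: extract the previous edge of a minimal witness walk
  have prevClaim : ∀ b, b ∈ E → b ≠ sIdx → ∃ a mq, Ends a mq ∧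
      ∃ harc : mq < (paths a).length,
        ((paths a)[mq]'harc).2 = vf b ∧ ℓ a mq < ℓ b (nf b) := by
    intro b hb hbne
    obtain ⟨w, hne, hwalk, hhead, hltb, hlast⟩ := nf_mem b hb
    have hvfb : vf b = ((paths b)[nf b]'hltb).1 := vf_eq b hltb
    have hL : 1 ≤ w.length := by
      have := List.length_pos_iff.2 hne; omega
    rcases eq_or_lt_of_le hL with hL1 | hL2
    · -- single-element walk: its source is s, lying on paths b, contradiction
      obtain ⟨x, rfl⟩ := List.length_eq_one_iff.1 hL1.symm
      simp only [List.getLast?_singleton, Option.some.injEq] at hlast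
      simp only [List.head?_cons, Option.map_some] at hhead
      rw [hlast] at hhead
      simp only at hhead
      have hmem : s ∈ staticVerts (paths b) := by
        have h1 := staticVerts_fst hltb
        rw [hhead] at h1
        exact List.mem_of_getElem? h1
      exact absurd (honly b hmem) hbne
    · -- at least two elements: take the previous edge
      set w' := w.dropLast with hw'
      have hw'len : w'.length = w.length - 1 := List.length_dropLast
      have hw'ne : w' ≠ [] := List.ne_nil_of_length_pos (by omega)
      have hw'walk : IsAWalk P w' :=
        ⟨fun x hx => hwalk.1 x (List.mem_of_mem_dropLast hx),
         hwalk.2.prefix (List.dropLast_prefix w)⟩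
      have hw'head : w'.head? = w.head? := by
        rw [List.head?_eq_getElem?, List.head?_eq_getElem?, hw', List.getElem?_dropLast,
          if_pos (by omega)]
      have hw'last : w'.getLast? = w[w.length - 2]? := by
        rw [hw', List.getLast?_dropLast, if_neg (by omega)]
      have hprevlt : w.length - 2 < w.length := by omega
      set prev := w[w.length - 2]'hprevlt with hprev
      have hw'last' : w'.getLast? = some prev := by
        rw [hw'last, List.getElem?_eq_getElem hprevlt]
      have hwlastel : w[w.length - 1]'(by omega) =
          (b, ⟨((paths b)[nf b]'hltb).1, ((paths b)[nf b]'hltb).2, ℓ b (nf b)⟩) := by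
        have := hlast
        rw [List.getLast?_eq_getElem?, List.getElem?_eq_getElem (by omega : w.length - 1 < w.length)] at this
        exact Option.some.inj this
      have hstep : TemporalStep prev.2
          (⟨((paths b)[nf b]'hltb).1, ((paths b)[nf b]'hltb).2, ℓ b (nf b)⟩ : TEdge V) := by
        have hc := List.isChain_iff_getElem.1 hwalk.2 (w.length - 2) (by omega)
        simp only [show w.length - 2 + 1 = w.length - 1 from by omega, hwlastel] at hc
        exact hc
      have hprevmem : prev ∈ w := List.getElem_mem hprevlt
      have : prev.2 ∈ P prev.1 := hwalk.1 prev hprevmem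
      rw [hP] at this
      obtain ⟨mq, hmq, hEq⟩ := mem_mkTemporal.1 this
      refine ⟨prev.1, mq, ?_, hmq, ?_, ?_⟩
      · refine ⟨w', hw'ne, hw'walk, by rw [hw'head]; exact hhead, hmq, ?_⟩
        rw [hw'last']
        congr 1
        rw [← hEq]
      · rw [hvfb]
        have : prev.2.dst = ((paths b)[nf b]'hltb).1 := hstep.1
        rw [hEq] at this
        exact this
      · have : prev.2.lab < ℓ b (nf b) := hstep.2
        rw [hEq] at this
        exact this
  set qf : Fin k → Fin k := fun b =>
    if h : b ∈ E ∧ b ≠ sIdx then (prevClaim b h.1 h.2).choose else sIdx with hqf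
  have qf_spec : ∀ b (h : b ∈ E ∧ b ≠ sIdx), ∃ mq, Ends (qf b) mq ∧
      ∃ harc : mq < (paths (qf b)).length,
        ((paths (qf b))[mq]'harc).2 = vf b ∧ ℓ (qf b) mq < ℓ b (nf b) := by
    intro b h
    have := (prevClaim b h.1 h.2).choose_spec
    simp only [hqf, dif_pos h]
    exact this
  set 𝒱 : Set (V × Fin k × Fin k) :=
    {x | (x.2.2 ∈ E ∧ x.2.2 ≠ sIdx) ∧ x.1 = vf x.2.2 ∧ x.2.1 = qf x.2.2} with h𝒱
  have mem𝒱 : ∀ v a b, (v, a, b) ∈ 𝒱 ↔ ((b ∈ E ∧ b ≠ sIdx) ∧ v = vf b ∧ a = qf b) := by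
    intro v a b; rfl
  set Lf : Fin k → ℤ := fun b => ℓ b (nf b) with hLf
  have qf_key : ∀ b, b ∈ E → b ≠ sIdx → qf b ∈ E ∧ Lf (qf b) < Lf b := by
    intro b hb hbne
    obtain ⟨mq, hEnds_q, harc, -, hlt⟩ := qf_spec b ⟨hb, hbne⟩
    have hqE : qf b ∈ E := ⟨mq, hEnds_q⟩
    refine ⟨hqE, ?_⟩
    have h1 : nf (qf b) ≤ mq := Nat.sInf_le hEnds_q
    have h2 : ℓ (qf b) (nf (qf b)) ≤ ℓ (qf b) mq := by
      have := lab_mono (hmono (qf b)) (mq - nf (qf b)) (nf (qf b))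
        (by rw [show nf (qf b) + (mq - nf (qf b)) = mq from by omega]; exact harc)
      rwa [show nf (qf b) + (mq - nf (qf b)) = mq from by omega] at this
    calc Lf (qf b) = ℓ (qf b) (nf (qf b)) := rfl
      _ ≤ ℓ (qf b) mq := h2
      _ < ℓ b (nf b) := hlt
      _ = Lf b := rfl
  have treeC : ∀ (N : ℕ) (b : Fin k), b ∈ E →
      ({c | c ∈ E ∧ Lf c < Lf b}.ncard ≤ N) →
      Relation.ReflTransGen (svsEdgeS 𝒱) sIdx b := by
    intro N
    induction N with
    | zero =>
      intro b hb hcard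
      by_cases hbne : b = sIdx
      · subst hbne; exact Relation.ReflTransGen.refl
      · obtain ⟨hqE, hqlt⟩ := qf_key b hb hbne
        have : qf b ∈ {c | c ∈ E ∧ Lf c < Lf b} := ⟨hqE, hqlt⟩
        have := Set.ncard_pos (Set.toFinite _) |>.2 ⟨_, this⟩
        omega
    | succ N IH =>
      intro b hb hcard
      by_cases hbne : b = sIdx
      · subst hbne; exact Relation.ReflTransGen.refl
      · obtain ⟨hqE, hqlt⟩ := qf_key b hb hbne
        have hss : {c | c ∈ E ∧ Lf c < Lf (qf b)} ⊂ {c | c ∈ E ∧ Lf c < Lf b} := by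
          constructor
          · intro c ⟨hc1, hc2⟩; exact ⟨hc1, hc2.trans hqlt⟩
          · intro hsub
            have : qf b ∈ {c | c ∈ E ∧ Lf c < Lf (qf b)} := hsub ⟨hqE, hqlt⟩
            exact absurd this.2 (lt_irrefl _)
        have hlt : {c | c ∈ E ∧ Lf c < Lf (qf b)}.ncard < {c | c ∈ E ∧ Lf c < Lf b}.ncard :=
          Set.ncard_lt_ncard hss (Set.toFinite _)
        exact (IH (qf b) hqE (by omega)).tail ⟨vf b, (mem𝒱 _ _ _).2 ⟨⟨hb, hbne⟩, rfl, rfl⟩⟩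
  have hSVS : IsStaticSVS paths sIdx 𝒱 := by
    constructor
    · rintro v a b hv
      obtain ⟨⟨hbE, hbne⟩, rfl, rfl⟩ := (mem𝒱 _ _ _).1 hv
      obtain ⟨mq, -, harc, harc2, -⟩ := qf_spec b ⟨hbE, hbne⟩
      refine ⟨⟨(paths (qf b))[mq]'harc, List.getElem_mem harc, harc2⟩,
        ⟨(paths b)[nf b]'(nf_lt b hbE), List.getElem_mem (nf_lt b hbE),
          (vf_eq b (nf_lt b hbE)).symm⟩⟩
    · rintro v v' a a' b h1 h2
      obtain ⟨-, rfl, rfl⟩ := (mem𝒱 _ _ _).1 h1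
      obtain ⟨-, rfl, rfl⟩ := (mem𝒱 _ _ _).1 h2
      exact ⟨rfl, rfl⟩
    · rintro v a hv
      exact ((mem𝒱 _ _ _).1 hv).1.2 rfl
    · rintro v a b h1 v' c h2
      obtain ⟨⟨hbE, hbne⟩, rfl, rfl⟩ := (mem𝒱 _ _ _).1 h1
      obtain ⟨⟨hcE, hcne⟩, rfl, hbq⟩ := (mem𝒱 _ _ _).1 h2
      -- h2 : switch off b (= qf c) onto c at vertex vf c
      subst hbq
      obtain ⟨mq, hEndsq, harc, harc2, -⟩ := qf_spec c ⟨hcE, hcne⟩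
      have hmq_ge : nf (qf c) ≤ mq := Nat.sInf_le hEndsq
      refine ⟨nf (qf c), mq + 1, by omega, ?_, ?_⟩
      · rw [staticVerts_fst (nf_lt (qf c) hbE), ← vf_eq (qf c) (nf_lt (qf c) hbE)]
      · rw [staticVerts_snd (hpaths (qf c)) harc, harc2]
    · rintro v a b h1
      obtain ⟨⟨hbE, hbne⟩, rfl, rfl⟩ := (mem𝒱 _ _ _).1 h1
      exact treeC _ (qf b) (qf_key b hbE hbne).1 le_rfl
  refine ⟨𝒱, hSVS, ?_⟩
  intro w hw
  rcases hw with rfl | ⟨p, hne, hwalk, hhead, hlastmap⟩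
  · exact Or.inl ⟨0, 0, le_rfl, hfirst', hfirst'⟩
  · obtain ⟨x, hxlast, hxdst⟩ := Option.map_eq_some_iff.1 hlastmap
    have hxmem : x ∈ p := by
      rw [List.getLast?_eq_getElem?] at hxlast
      exact List.mem_of_getElem? hxlast
    have hxP : x.2 ∈ P x.1 := hwalk.1 x hxmem
    rw [hP] at hxP
    obtain ⟨mq, hmq, hEq⟩ := mem_mkTemporal.1 hxP
    have hEndsx : Ends x.1 mq := by
      refine ⟨p, hne, hwalk, hhead, hmq, ?_⟩
      rw [hxlast]
      congr 1
      rw [← hEq]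
    have hwdst : w = ((paths x.1)[mq]'hmq).2 := by
      rw [← hxdst, hEq]
    by_cases hxs : x.1 = sIdx
    · refine Or.inl ⟨0, mq + 1, by omega, hfirst', ?_⟩
      rw [← hxs, staticVerts_snd (hpaths x.1) hmq, hwdst]
    · have hxE : x.1 ∈ E := ⟨mq, hEndsx⟩
      have hmq_ge : nf x.1 ≤ mq := Nat.sInf_le hEndsx
      refine Or.inr ⟨vf x.1, qf x.1, x.1, (mem𝒱 _ _ _).2 ⟨⟨hxE, hxs⟩, rfl, rfl⟩,
        nf x.1, mq + 1, by omega, ?_, ?_⟩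
      · rw [staticVerts_fst (nf_lt x.1 hxE), ← vf_eq x.1 (nf_lt x.1 hxE)]
      · rw [staticVerts_snd (hpaths x.1) hmq, hwdst]

end DirAMain


/-- For a collection of `k` static directed paths with source
`s` being the first vertex of the distinguished path `paths sIdx` (and lying on
no other path), the maximum over all strictly increasing labelings of the number
of vertices reachable from `s` equals the maximum over all label-free
switch-vertex-sets `𝒱` of the number of vertices in the union of the suffix of
`paths sIdx` from `s` and the suffixes of the switched-onto paths from their
switch vertices. -/
theorem stmt14 {V : Type} [Fintype V] {k : ℕ} (paths : Fin k → List (V × V))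
    (hpaths : ∀ i, (paths i).Chain' (fun e f => e.2 = f.1))
    (sIdx : Fin k) (s : V)
    (hnd : ∀ i, (staticVerts (paths i)).Nodup)
    (hfirst : (staticVerts (paths sIdx)).head? = some s)
    (honly : ∀ i, s ∈ staticVerts (paths i) → i = sIdx) :
    sSup {m : ℕ | ∃ ℓ : Fin k → ℕ → ℤ,
        (∀ i n, n + 1 < (paths i).length → ℓ i n < ℓ i (n + 1)) ∧
        m = {w | Reaches (fun i => mkTemporal (paths i) (ℓ i)) s w}.ncard} =
    sSup {m : ℕ | ∃ 𝒱 : Set (V × Fin k × Fin k), IsStaticSVS paths sIdx 𝒱 ∧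
        m = ({w | le_onStatic (paths sIdx) s w} ∪
          {w | ∃ v a b, (v, a, b) ∈ 𝒱 ∧ le_onStatic (paths b) v w}).ncard} := by
  classical
  have hcard : ∀ (A : Set V), A.ncard ≤ Fintype.card V := by
    intro A
    have := Set.ncard_le_ncard (Set.subset_univ A) Set.finite_univ
    rwa [Set.ncard_univ, Nat.card_eq_fintype_card] at this
  have hBddL : BddAbove {m : ℕ | ∃ ℓ : Fin k → ℕ → ℤ,
      (∀ i n, n + 1 < (paths i).length → ℓ i n < ℓ i (n + 1)) ∧
      m = {w | Reaches (fun i => mkTemporal (paths i) (ℓ i)) s w}.ncard} := by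
    refine ⟨Fintype.card V, ?_⟩
    rintro m ⟨ℓ, -, rfl⟩
    exact hcard _
  have hBddR : BddAbove {m : ℕ | ∃ 𝒱 : Set (V × Fin k × Fin k), IsStaticSVS paths sIdx 𝒱 ∧
      m = ({w | le_onStatic (paths sIdx) s w} ∪
        {w | ∃ v a b, (v, a, b) ∈ 𝒱 ∧ le_onStatic (paths b) v w}).ncard} := by
    refine ⟨Fintype.card V, ?_⟩
    rintro m ⟨𝒱, -, rfl⟩
    exact hcard _
  have hVempty : IsStaticSVS paths sIdx (∅ : Set (V × Fin k × Fin k)) := by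
    constructor
    · rintro v a b h; exact h.elim
    · rintro v v' a a' b h _; exact h.elim
    · rintro v a h; exact h
    · rintro v a b h; exact h.elim
    · rintro v a b h; exact h.elim
  apply le_antisymm
  · apply csSup_le
    · exact ⟨_, ⟨fun _ n => (n : ℤ), fun i n _ => by simp only; exact_mod_cast Nat.lt_succ_self n, rfl⟩⟩
    · rintro m ⟨ℓ, hℓ, rfl⟩
      obtain ⟨𝒱, hSVS, hsub⟩ := dirA paths hpaths sIdx s hnd hfirst honly ℓ hℓ
      calc {w | Reaches (fun i => mkTemporal (paths i) (ℓ i)) s w}.ncard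
          ≤ ({w | le_onStatic (paths sIdx) s w} ∪
              {w | ∃ v a b, (v, a, b) ∈ 𝒱 ∧ le_onStatic (paths b) v w}).ncard :=
            Set.ncard_le_ncard hsub (Set.toFinite _)
        _ ≤ _ := le_csSup hBddR ⟨𝒱, hSVS, rfl⟩
  · apply csSup_le
    · exact ⟨_, ⟨∅, hVempty, rfl⟩⟩
    · rintro m ⟨𝒱, hSVS, rfl⟩
      obtain ⟨ℓ, hℓ, hsub⟩ := dirB paths hpaths sIdx s hnd hfirst 𝒱 hSVS
      calc ({w | le_onStatic (paths sIdx) s w} ∪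
              {w | ∃ v a b, (v, a, b) ∈ 𝒱 ∧ le_onStatic (paths b) v w}).ncard
          ≤ {w | Reaches (fun i => mkTemporal (paths i) (ℓ i)) s w}.ncard :=
            Set.ncard_le_ncard hsub (Set.toFinite _)
        _ ≤ _ := le_csSup hBddL ⟨ℓ, hℓ, rfl⟩
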